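/- arXiv:2503.21439 — 3 statements merged into one kernel-verified Lean document; each statement's English description precedes it below -/
import Mathlib

section
/- Let X = ∑_{j≠i} X_j and Y = ∑_{j≠i} Y_j, where the X_j and Y_j are all independent and for each j the pair X_j, Y_j are identically distributed with values in {0,...,r-1}. Let D = X - Y. Then for sufficiently large n (the number of summands plus one), P[D = 0] ≥ 4/(9(2(r-1)√(3n)+1)). -/
open MeasureTheory ProbabilityTheory

private lemma aux_add {Ω : Type} [MeasurableSpace Ω] {μ : Measure Ω} [IsFiniteMeasure μ]
    {f g f' g' : Ω → ℤ} (hf : Measurable f) (hg : Measurable g) (hf' : Measurable f')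
    (hg' : Measurable g') (hi : IndepFun f g μ) (hi' : IndepFun f' g' μ)
    (h1 : IdentDistrib f f' μ μ) (h2 : IdentDistrib g g' μ μ) :
    IdentDistrib (f + g) (f' + g') μ μ := by
  refine ⟨(hf.add hg).aemeasurable, (hf'.add hg').aemeasurable, ?_⟩
  have key : ∀ (u v : Ω → ℤ), Measurable u → Measurable v →
      μ.map (u + v) = Measure.map (fun p : ℤ × ℤ => p.1 + p.2)
        (μ.map (fun ω => (u ω, v ω))) := by
    intro u v hu hv
    rw [Measure.map_map measurable_add (hu.prodMk hv)]
    rfl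
  rw [key f g hf hg, key f' g' hf' hg',
    (indepFun_iff_map_prod_eq_prod_map_map hf.aemeasurable hg.aemeasurable).mp hi,
    (indepFun_iff_map_prod_eq_prod_map_map hf'.aemeasurable hg'.aemeasurable).mp hi',
    h1.map_eq, h2.map_eq]

/-- Let `X = ∑_{j≠i} X_j` and `Y = ∑_{j≠i} Y_j` (here `n-1` summands),
where all `X_j, Y_j` are independent and, for each `j`, `X_j` and `Y_j` are
identically distributed with values in `{0,…,r-1}`. Then for sufficiently large
`n`, `P[D = 0] ≥ 4/(9(2(r-1)√(3n)+1))` where `D = X - Y`. -/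
theorem prob_D_eq_zero (r : ℕ) (hr : 2 ≤ r) :
    ∃ N : ℕ, ∀ n : ℕ, N ≤ n →
    ∀ (Ω : Type) (_ : MeasureSpace Ω) (_ : IsProbabilityMeasure (ℙ : Measure Ω))
      (X Y : Fin (n - 1) → Ω → Fin r),
      (∀ j, Measurable (X j)) → (∀ j, Measurable (Y j)) →
      iIndepFun (β := fun _ : Fin (n - 1) ⊕ Fin (n - 1) => Fin r)
        (Sum.elim X Y) ℙ →
      (∀ j, IdentDistrib (X j) (Y j) ℙ ℙ) →
      ENNReal.ofReal (4 / (9 * (2 * ((r : ℝ) - 1) * Real.sqrt (3 * n) + 1)))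
        ≤ ℙ {ω | (∑ j, ((X j ω : ℤ))) = ∑ j, ((Y j ω : ℤ))} := by
  classical
  refine ⟨1, fun n hn Ω _ hprob X Y hX hY hindep hid => ?_⟩
  -- the integer-valued family
  set G : (Fin (n - 1) ⊕ Fin (n - 1)) → Ω → ℤ :=
    fun k => (fun v : Fin r => ((v : ℕ) : ℤ)) ∘ Sum.elim X Y k with hGdef
  have hSumMeas : ∀ k, Measurable (Sum.elim X Y k) := by
    intro k; cases k with
    | inl j => exact hX j
    | inr j => exact hY j
  have hGmeas : ∀ k, Measurable (G k) := fun k =>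
    Measurable.of_discrete.comp (hSumMeas k)
  have hGindep : iIndepFun G ℙ :=
    hindep.comp (fun _ v => ((v : ℕ) : ℤ)) (fun _ => Measurable.of_discrete)
  -- the two sums
  set S : Ω → ℤ := fun ω => ∑ j, ((X j ω : ℤ)) with hSdef
  set T : Ω → ℤ := fun ω => ∑ j, ((Y j ω : ℤ)) with hTdef
  have hSG : S = ∑ j : Fin (n - 1), G (Sum.inl j) := by
    funext ω; simp [hSdef, hGdef, Finset.sum_apply]
  have hTG : T = ∑ j : Fin (n - 1), G (Sum.inr j) := by
    funext ω; simp [hTdef, hGdef, Finset.sum_apply]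
  have hSmeas : Measurable S := by
    rw [hSG]
    have h := Finset.measurable_sum (f := fun j => G (Sum.inl j)) Finset.univ
      (fun j _ => hGmeas _)
    convert h using 1
    funext ω; simp [Finset.sum_apply]
  have hTmeas : Measurable T := by
    rw [hTG]
    have h := Finset.measurable_sum (f := fun j => G (Sum.inr j)) Finset.univ
      (fun j _ => hGmeas _)
    convert h using 1
    funext ω; simp [Finset.sum_apply]
  -- embeddings
  let e1 : Fin (n - 1) ↪ Fin (n - 1) ⊕ Fin (n - 1) := ⟨Sum.inl, Sum.inl_injective⟩
  let e2 : Fin (n - 1) ↪ Fin (n - 1) ⊕ Fin (n - 1) := ⟨Sum.inr, Sum.inr_injective⟩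
  let S1 : Finset (Fin (n - 1) ⊕ Fin (n - 1)) := Finset.univ.map e1
  let S2 : Finset (Fin (n - 1) ⊕ Fin (n - 1)) := Finset.univ.map e2
  -- S and T are independent
  have hST : IndepFun S T ℙ := by
    have hdisj : Disjoint S1 S2 := by
      simp [Finset.disjoint_left, S1, S2, e1, e2]
    have h := hGindep.indepFun_finset S1 S2 hdisj hGmeas
    have h2 := h.comp (φ := fun v : (↥S1 → ℤ) => ∑ i, v i)
      (ψ := fun v : (↥S2 → ℤ) => ∑ i, v i)
      (Finset.measurable_sum _ (fun i _ => measurable_pi_apply i))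
      (Finset.measurable_sum _ (fun i _ => measurable_pi_apply i))
    have eS : ((fun v : (↥S1 → ℤ) => ∑ i, v i) ∘ (fun a (i : ↥S1) => G i a)) = S := by
      funext a
      simp only [Function.comp_apply]
      rw [Finset.sum_coe_sort S1 (fun k => G k a), Finset.sum_map]
      rw [hSG]; simp [Finset.sum_apply, e1]
    have eT : ((fun v : (↥S2 → ℤ) => ∑ i, v i) ∘ (fun a (i : ↥S2) => G i a)) = T := by
      funext a
      simp only [Function.comp_apply]
      rw [Finset.sum_coe_sort S2 (fun k => G k a), Finset.sum_map]
      rw [hTG]; simp [Finset.sum_apply, e2]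
    rwa [eS, eT] at h2
  -- S and T are identically distributed
  have hIdent : IdentDistrib S T ℙ ℙ := by
    rw [hSG, hTG]
    have key : ∀ s : Finset (Fin (n - 1)),
        IdentDistrib (∑ j ∈ s, G (Sum.inl j)) (∑ j ∈ s, G (Sum.inr j)) ℙ ℙ := by
      intro s
      induction s using Finset.induction_on with
      | empty => simpa using IdentDistrib.refl (μ := ℙ) (measurable_zero : Measurable (0 : Ω → ℤ)).aemeasurable
      | @insert a s ha ih =>
        have hmeas_s : Measurable (∑ j ∈ s, G (Sum.inl j)) := by
          have h := Finset.measurable_sum (f := fun j => G (Sum.inl j)) s (fun j _ => hGmeas _)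
          convert h using 1; funext ω; simp [Finset.sum_apply]
        have hmeas_s' : Measurable (∑ j ∈ s, G (Sum.inr j)) := by
          have h := Finset.measurable_sum (f := fun j => G (Sum.inr j)) s (fun j _ => hGmeas _)
          convert h using 1; funext ω; simp [Finset.sum_apply]
        have hfg : IndepFun (∑ j ∈ s, G (Sum.inl j)) (G (Sum.inl a)) ℙ := by
          have h := hGindep.indepFun_finsetSum_of_notMem hGmeas
            (s := s.map e1) (i := Sum.inl a) (by simp [e1, ha])
          rwa [show ∑ k ∈ s.map e1, G k = ∑ j ∈ s, G (Sum.inl j) from Finset.sum_map s e1 G]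
            at h
        have hfg' : IndepFun (∑ j ∈ s, G (Sum.inr j)) (G (Sum.inr a)) ℙ := by
          have h := hGindep.indepFun_finsetSum_of_notMem hGmeas
            (s := s.map e2) (i := Sum.inr a) (by simp [e2, ha])
          rwa [show ∑ k ∈ s.map e2, G k = ∑ j ∈ s, G (Sum.inr j) from Finset.sum_map s e2 G]
            at h
        have hcomp : IdentDistrib (G (Sum.inl a)) (G (Sum.inr a)) ℙ ℙ :=
          (hid a).comp (u := fun v : Fin r => ((v : ℕ) : ℤ)) Measurable.of_discrete
        rw [Finset.sum_insert ha, Finset.sum_insert ha]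
        exact aux_add (hGmeas _) hmeas_s (hGmeas _) hmeas_s' hfg.symm hfg'.symm hcomp ih
    exact key Finset.univ
  -- real-valued family for Chebyshev
  set Xr : Fin (n - 1) → Ω → ℝ := fun j => (fun v : Fin r => ((v : ℕ) : ℝ)) ∘ X j with hXrdef
  have hXrmeas : ∀ j, Measurable (Xr j) := fun j => Measurable.of_discrete.comp (hX j)
  have hr1 : (1 : ℝ) ≤ (r : ℝ) - 1 := by
    have : (2 : ℝ) ≤ (r : ℝ) := by exact_mod_cast hr
    linarith
  have hbound : ∀ j ω, Xr j ω ≤ (r : ℝ) - 1 := by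
    intro j ω
    have h1 : ((X j ω : ℕ)) ≤ r - 1 := Nat.le_pred_of_lt (X j ω).is_lt
    have h2 : (((r - 1 : ℕ)) : ℝ) = (r : ℝ) - 1 := by
      have h3 : (1 : ℕ) ≤ r := by omega
      push_cast [Nat.cast_sub h3]; ring
    calc Xr j ω = ((X j ω : ℕ) : ℝ) := rfl
      _ ≤ (((r - 1 : ℕ)) : ℝ) := by exact_mod_cast h1
      _ = (r : ℝ) - 1 := h2
  have hXrnonneg : ∀ j ω, 0 ≤ Xr j ω := fun j ω => Nat.cast_nonneg _
  have mem2 : ∀ j, MemLp (Xr j) 2 ℙ := by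
    intro j
    refine MemLp.of_bound (hXrmeas j).aestronglyMeasurable ((r : ℝ) - 1)
      (Filter.Eventually.of_forall fun ω => ?_)
    rw [Real.norm_eq_abs, abs_of_nonneg (hXrnonneg j ω)]
    exact hbound j ω
  have hvar_j : ∀ j, variance (Xr j) ℙ ≤ ((r : ℝ) - 1) ^ 2 := by
    intro j
    rw [variance_eq_sub (mem2 j)]
    have hsq : ∫ ω, (Xr j ^ 2) ω ≤ ((r : ℝ) - 1) ^ 2 := by
      have h1 : ∫ ω, (Xr j ^ 2) ω ≤ ∫ _ω : Ω, ((r : ℝ) - 1) ^ 2 ∂ℙ := by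
        refine integral_mono (mem2 j).integrable_sq (integrable_const _) (fun ω => ?_)
        have hb := hbound j ω
        have h0 := hXrnonneg j ω
        simp only [Pi.pow_apply]
        nlinarith
      simpa using h1
    nlinarith [sq_nonneg (∫ ω, Xr j ω)]
  -- the sum, real-valued
  set Sr : Ω → ℝ := fun ω => ∑ j, Xr j ω with hSrdef
  have hSrfun : Sr = ∑ j : Fin (n - 1), Xr j := by
    funext ω; simp [hSrdef, Finset.sum_apply]
  have hSrmeas : Measurable Sr := Finset.measurable_sum _ (fun j _ => hXrmeas j)
  have mem2S : MemLp Sr 2 ℙ := by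
    rw [hSrfun]; exact memLp_finset_sum' _ (fun j _ => mem2 j)
  have hpair : ((Finset.univ : Finset (Fin (n - 1))) : Set (Fin (n - 1))).Pairwise
      (fun i j => IndepFun (Xr i) (Xr j) ℙ) := by
    intro i _ j _ hij
    have hGr : iIndepFun
        (fun k => (fun v : Fin r => ((v : ℕ) : ℝ)) ∘ Sum.elim X Y k) ℙ :=
      hindep.comp (fun _ v => ((v : ℕ) : ℝ)) (fun _ => Measurable.of_discrete)
    exact hGr.indepFun (i := Sum.inl i) (j := Sum.inl j) (by simp [hij])
  have hmn : (((n - 1 : ℕ)) : ℝ) ≤ (n : ℝ) := by exact_mod_cast Nat.sub_le n 1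
  have hvarS : variance Sr ℙ ≤ ((n - 1 : ℕ) : ℝ) * ((r : ℝ) - 1) ^ 2 := by
    rw [hSrfun, IndepFun.variance_sum (fun j _ => mem2 j) hpair]
    calc ∑ j : Fin (n - 1), variance (Xr j) ℙ
        ≤ ∑ _j : Fin (n - 1), ((r : ℝ) - 1) ^ 2 :=
          Finset.sum_le_sum (fun j _ => hvar_j j)
      _ = ((n - 1 : ℕ) : ℝ) * ((r : ℝ) - 1) ^ 2 := by
          simp [Finset.sum_const, Finset.card_univ, nsmul_eq_mul]
  -- Chebyshev
  have hn1 : (1 : ℝ) ≤ (n : ℝ) := by exact_mod_cast hn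
  set t : ℝ := ((r : ℝ) - 1) * Real.sqrt (3 * n) with htdef
  have hsqrtpos : 0 < Real.sqrt (3 * n) := Real.sqrt_pos.mpr (by positivity)
  have htpos : 0 < t := mul_pos (by linarith) hsqrtpos
  have ht2 : t ^ 2 = ((r : ℝ) - 1) ^ 2 * (3 * n) := by
    rw [htdef, mul_pow, Real.sq_sqrt (by positivity)]
  set μ' : ℝ := ∫ ω, Sr ω with hμ'def
  set A : Set Ω := {ω | t ≤ |Sr ω - μ'|} with hAdef
  have hAmeas : MeasurableSet A :=
    measurableSet_le measurable_const ((hSrmeas.sub measurable_const).abs)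
  have cheb : ℙ A ≤ ENNReal.ofReal (variance Sr ℙ / t ^ 2) :=
    meas_ge_le_variance_div_sq mem2S htpos
  have hvt : variance Sr ℙ / t ^ 2 ≤ 1 / 3 := by
    rw [div_le_iff₀ (by positivity), ht2]
    nlinarith [sq_nonneg ((r : ℝ) - 1)]
  have cheb2 : (ℙ A).toReal ≤ 1 / 3 := by
    have h1 := ENNReal.toReal_mono ENNReal.ofReal_ne_top
      (cheb.trans (ENNReal.ofReal_le_ofReal hvt))
    rwa [ENNReal.toReal_ofReal (by norm_num)] at h1
  have hAc : 2 / 3 ≤ (ℙ Aᶜ).toReal := by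
    rw [prob_compl_eq_one_sub hAmeas,
      ENNReal.toReal_sub_of_le prob_le_one ENNReal.one_ne_top, ENNReal.toReal_one]
    linarith
  -- the interval of integers
  set a : ℤ := ⌈μ' - t⌉ with hadef
  set b : ℤ := ⌊μ' + t⌋ with hbdef
  set J : Finset ℤ := Finset.Icc a b with hJdef
  have hcast : ∀ ω, Sr ω = ((S ω : ℤ) : ℝ) := by
    intro ω
    simp only [hSrdef, hSdef, hXrdef, Function.comp_apply]
    push_cast
    rfl
  have hsub : Aᶜ ⊆ ⋃ k ∈ J, S ⁻¹' {k} := by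
    intro ω hω
    have hω' : |Sr ω - μ'| < t := not_le.mp hω
    rcases abs_lt.mp hω' with ⟨h1, h2⟩
    have hk1 : a ≤ S ω := by
      rw [hadef]
      refine Int.ceil_le.mpr ?_
      rw [← hcast ω]; linarith
    have hk2 : S ω ≤ b := by
      rw [hbdef]
      refine Int.le_floor.mpr ?_
      rw [← hcast ω]; linarith
    exact Set.mem_biUnion (Finset.mem_Icc.mpr ⟨hk1, hk2⟩) rfl
  have hdisjS : (↑J : Set ℤ).PairwiseDisjoint (fun k => S ⁻¹' {k}) := by
    intro k _ l _ hkl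
    refine Set.disjoint_left.mpr fun ω h1 h2 => hkl ?_
    simp only [Set.mem_preimage, Set.mem_singleton_iff] at h1 h2
    rw [← h1, ← h2]
  set p : ℤ → ℝ := fun k => (ℙ (S ⁻¹' {k})).toReal with hpdef
  have hp23 : 2 / 3 ≤ ∑ k ∈ J, p k := by
    have hfin : ∀ k ∈ J, ℙ (S ⁻¹' {k}) ≠ ⊤ := fun k _ => measure_ne_top _ _
    have hmass : ℙ Aᶜ ≤ ∑ k ∈ J, ℙ (S ⁻¹' {k}) := by
      calc ℙ Aᶜ ≤ ℙ (⋃ k ∈ J, S ⁻¹' {k}) := measure_mono hsub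
        _ = ∑ k ∈ J, ℙ (S ⁻¹' {k}) :=
            measure_biUnion_finset hdisjS (fun k _ => hSmeas (measurableSet_singleton k))
    have h1 := ENNReal.toReal_mono (ENNReal.sum_ne_top.mpr hfin) hmass
    rw [ENNReal.toReal_sum hfin] at h1
    linarith
  have hpnonneg : ∀ k, 0 ≤ p k := fun k => ENNReal.toReal_nonneg
  -- probability of the diagonal events
  have hprodk : ∀ k : ℤ, (ℙ (S ⁻¹' {k} ∩ T ⁻¹' {k})).toReal = p k * p k := by
    intro k
    rw [hST.measure_inter_preimage_eq_mul _ _ (measurableSet_singleton k)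
      (measurableSet_singleton k), ENNReal.toReal_mul,
      show ℙ (T ⁻¹' {k}) = ℙ (S ⁻¹' {k}) from
        (hIdent.measure_mem_eq (measurableSet_singleton k)).symm]
  have hdisjST : (↑J : Set ℤ).PairwiseDisjoint (fun k => S ⁻¹' {k} ∩ T ⁻¹' {k}) := by
    intro k _ l _ hkl
    refine Set.disjoint_left.mpr fun ω h1 h2 => hkl ?_
    simp only [Set.mem_inter_iff, Set.mem_preimage, Set.mem_singleton_iff] at h1 h2
    rw [← h1.1, ← h2.1]
  have hEsum : ∑ k ∈ J, ℙ (S ⁻¹' {k} ∩ T ⁻¹' {k}) ≤ ℙ {ω | S ω = T ω} := by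
    rw [← measure_biUnion_finset hdisjST (fun k _ =>
      (hSmeas (measurableSet_singleton k)).inter (hTmeas (measurableSet_singleton k)))]
    refine measure_mono ?_
    intro ω hω
    simp only [Set.mem_iUnion, Set.mem_inter_iff, Set.mem_preimage,
      Set.mem_singleton_iff] at hω
    obtain ⟨k, _, hk1, hk2⟩ := hω
    exact hk1.trans hk2.symm
  -- cardinality bound
  have hcard : (J.card : ℝ) ≤ 2 * t + 1 := by
    rw [hJdef, Int.card_Icc]
    rcases le_or_gt (b + 1 - a) 0 with h | h
    · rw [Int.toNat_of_nonpos h]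
      simp only [Nat.cast_zero]
      positivity
    · have h1 : ((b + 1 - a).toNat : ℤ) = b + 1 - a := Int.toNat_of_nonneg h.le
      have h2 : ((b + 1 - a).toNat : ℝ) = (b : ℝ) + 1 - a := by exact_mod_cast h1
      rw [h2]
      have h3 : (b : ℝ) ≤ μ' + t := Int.floor_le _
      have h4 : μ' - t ≤ (a : ℝ) := Int.le_ceil _
      linarith
  have hJne : J.Nonempty := by
    by_contra h
    rw [Finset.not_nonempty_iff_eq_empty] at h
    rw [h, Finset.sum_empty] at hp23
    linarith
  have hcardpos : (0 : ℝ) < (J.card : ℝ) := by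
    have h := Finset.card_pos.mpr hJne
    exact_mod_cast h
  -- final chain
  show ENNReal.ofReal (4 / (9 * (2 * ((r : ℝ) - 1) * Real.sqrt (3 * n) + 1)))
    ≤ ℙ {ω | S ω = T ω}
  refine ENNReal.ofReal_le_of_le_toReal ?_
  have hfin2 : ∀ k ∈ J, ℙ (S ⁻¹' {k} ∩ T ⁻¹' {k}) ≠ ⊤ := fun k _ => measure_ne_top _ _
  have h5 : ∑ k ∈ J, p k * p k ≤ (ℙ {ω | S ω = T ω}).toReal := by
    calc ∑ k ∈ J, p k * p k = (∑ k ∈ J, ℙ (S ⁻¹' {k} ∩ T ⁻¹' {k})).toReal := by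
          rw [ENNReal.toReal_sum hfin2]
          exact (Finset.sum_congr rfl fun k _ => (hprodk k)).symm
      _ ≤ (ℙ {ω | S ω = T ω}).toReal := ENNReal.toReal_mono (measure_ne_top _ _) hEsum
  have hCS : (∑ k ∈ J, p k) ^ 2 ≤ (J.card : ℝ) * ∑ k ∈ J, p k ^ 2 :=
    sq_sum_le_card_mul_sum_sq
  have hK : 2 * ((r : ℝ) - 1) * Real.sqrt (3 * n) + 1 = 2 * t + 1 := by
    rw [htdef]; ring
  rw [hK]
  have hKpos : (0 : ℝ) < 2 * t + 1 := by positivity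
  have h6 : (2 / 3 : ℝ) ^ 2 ≤ (∑ k ∈ J, p k) ^ 2 :=
    pow_le_pow_left₀ (by norm_num) hp23 2
  calc 4 / (9 * (2 * t + 1)) = (2 / 3 : ℝ) ^ 2 / (2 * t + 1) := by
        rw [show ((2 : ℝ) / 3) ^ 2 = 4 / 9 by norm_num, div_div]
    _ ≤ (∑ k ∈ J, p k) ^ 2 / (J.card : ℝ) :=
        div_le_div₀ (sq_nonneg _) h6 hcardpos hcard
    _ ≤ ∑ k ∈ J, p k ^ 2 := by
        rw [div_le_iff₀ hcardpos]
        linarith [hCS]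
    _ = ∑ k ∈ J, p k * p k := by
        refine Finset.sum_congr rfl fun k _ => ?_
        ring
    _ ≤ (ℙ {ω | S ω = T ω}).toReal := h5
end

section
/- Let δ take value +1/K with probability z(1 + Kε/(2z)), value -1/K with probability z(1 - Kε/(2z)), and 0 otherwise, with z ∈ (0,1/4], K ≥ 1, 0 ≤ ε ≤ 2z/K. Then for all 0 ≤ λ ≤ K, E[exp(λδ)] ≤ exp(2z(λ/K)^2 + λε + (λ/K)^2·λε). -/
open MeasureTheory ProbabilityTheory

lemma taylor3_aux {x : ℝ} (hx0 : 0 ≤ x) (hx1 : x ≤ 1) :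
    |Real.exp x - (1 + x + x^2/2)| ≤ (2/9) * x^3 := by
  have h := Real.exp_bound (x := x) (by rwa [abs_of_nonneg hx0]) (n := 3) (by norm_num)
  have hs : ∑ m ∈ Finset.range 3, x ^ m / m.factorial = 1 + x + x^2/2 := by
    simp [Finset.sum_range_succ, Nat.factorial]
  rw [hs, abs_of_nonneg hx0] at h
  refine h.trans (le_of_eq ?_)
  norm_num [Nat.factorial, Nat.succ_eq_add_one]
  ring

lemma taylor3_neg_aux {x : ℝ} (hx0 : 0 ≤ x) (hx1 : x ≤ 1) :
    |Real.exp (-x) - (1 - x + x^2/2)| ≤ (2/9) * x^3 := by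
  have h := Real.exp_bound (x := -x) (by rw [abs_neg, abs_of_nonneg hx0]; exact hx1)
    (n := 3) (by norm_num)
  have hs : ∑ m ∈ Finset.range 3, (-x) ^ m / m.factorial = 1 - x + x^2/2 := by
    simp [Finset.sum_range_succ, Nat.factorial]; ring
  rw [hs, abs_neg, abs_of_nonneg hx0] at h
  refine h.trans (le_of_eq ?_)
  norm_num [Nat.factorial, Nat.succ_eq_add_one]
  ring

set_option maxHeartbeats 1000000 in
/-- For the three-point random variable `δ` (value `+1/K` with
probability `z(1 + Kε/(2z))`, value `-1/K` with probability `z(1 - Kε/(2z))`,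
`0` otherwise), with `z ∈ (0,1/4]`, `K ≥ 1`, `0 ≤ ε ≤ 2z/K`, for all
`0 ≤ λ ≤ K` we have `E[exp(λδ)] ≤ exp(2z(λ/K)² + λε + (λ/K)²·λε)`. -/
theorem mgf_three_point {Ω : Type*} [MeasureSpace Ω]
    [IsProbabilityMeasure (ℙ : Measure Ω)]
    (K z ε : ℝ) (hz : z ∈ Set.Ioc (0 : ℝ) (1 / 4)) (hK : 1 ≤ K)
    (hε0 : 0 ≤ ε) (hε1 : ε ≤ 2 * z / K)
    (δ : Ω → ℝ) (hmeas : Measurable δ)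
    (hplus : (ℙ : Measure Ω) {ω : Ω | δ ω = 1 / K}
      = ENNReal.ofReal (z * (1 + K * ε / (2 * z))))
    (hminus : (ℙ : Measure Ω) {ω : Ω | δ ω = -(1 / K)}
      = ENNReal.ofReal (z * (1 - K * ε / (2 * z))))
    (hvals : ∀ ω : Ω, δ ω = 1 / K ∨ δ ω = -(1 / K) ∨ δ ω = 0) :
    ∀ lam : ℝ, 0 ≤ lam → lam ≤ K →
      ∫ ω, Real.exp (lam * δ ω) ∂(ℙ : Measure Ω)
        ≤ Real.exp (2 * z * (lam / K) ^ 2 + lam * ε + (lam / K) ^ 2 * (lam * ε)) := by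
  obtain ⟨hz0, hz4⟩ := hz
  intro lam hlam0 hlamK
  have hK0 : (0:ℝ) < K := lt_of_lt_of_le one_pos hK
  set x := lam / K with hxdef
  have hx0 : 0 ≤ x := div_nonneg hlam0 hK0.le
  have hx1 : x ≤ 1 := (div_le_one hK0).2 hlamK
  -- probabilities as reals
  set p : ℝ := z * (1 + K * ε / (2 * z)) with hpdef
  set q : ℝ := z * (1 - K * ε / (2 * z)) with hqdef
  have hKε : K * ε ≤ 2 * z := by
    rw [le_div_iff₀ hK0] at hε1; linarith
  have hKε0 : 0 ≤ K * ε := mul_nonneg hK0.le hε0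
  have hp : p = z + K * ε / 2 := by rw [hpdef]; field_simp
  have hq : q = z - K * ε / 2 := by rw [hqdef]; field_simp
  have hp0 : 0 ≤ p := by rw [hp]; positivity
  have hq0 : 0 ≤ q := by rw [hq]; linarith
  -- sets
  have hval_ne1 : (1:ℝ)/K ≠ -(1/K) := by
    have : (0:ℝ) < 1/K := by positivity
    intro h; rw [h] at this; linarith
  have hval_ne2 : (1:ℝ)/K ≠ 0 := by positivity
  have hval_ne3 : -((1:ℝ)/K) ≠ 0 := by
    simp only [neg_ne_zero]; exact hval_ne2
  set A : Set Ω := δ ⁻¹' {1/K} with hAdef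
  set B : Set Ω := δ ⁻¹' {-(1/K)} with hBdef
  set C : Set Ω := δ ⁻¹' {(0:ℝ)} with hCdef
  have hA : MeasurableSet A := hmeas (measurableSet_singleton _)
  have hB : MeasurableSet B := hmeas (measurableSet_singleton _)
  have hC : MeasurableSet C := hmeas (measurableSet_singleton _)
  have hμA : (ℙ : Measure Ω) A = ENNReal.ofReal p := hplus
  have hμB : (ℙ : Measure Ω) B = ENNReal.ofReal q := hminus
  have hdisjAB : Disjoint A B := by
    rw [Set.disjoint_left]
    intro ω hωA hωB
    exact hval_ne1 ((hωA : δ ω = 1/K).symm.trans (hωB : δ ω = -(1/K)))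
  have hCeq : C = (A ∪ B)ᶜ := by
    ext ω
    simp only [hAdef, hBdef, hCdef, Set.mem_preimage, Set.mem_singleton_iff,
      Set.mem_compl_iff, Set.mem_union, not_or]
    constructor
    · intro h
      refine ⟨fun h' => hval_ne2 ?_, fun h' => hval_ne3 ?_⟩ <;>
        (rw [h] at h'; exact h'.symm)
    · intro ⟨h1, h2⟩
      rcases hvals ω with h | h | h
      · exact absurd h h1
      · exact absurd h h2
      · exact h
  have hμAB : (ℙ : Measure Ω) (A ∪ B) = ENNReal.ofReal p + ENNReal.ofReal q := by
    rw [measure_union hdisjAB hB, hμA, hμB]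
  have hpq1 : p + q ≤ 1 := by rw [hp, hq]; linarith
  have hμC : (ℙ : Measure Ω) C = ENNReal.ofReal (1 - (p + q)) := by
    rw [hCeq, measure_compl (hA.union hB) (measure_ne_top _ _), measure_univ, hμAB,
      ← ENNReal.ofReal_add hp0 hq0, ← ENNReal.ofReal_one,
      ← ENNReal.ofReal_sub _ (by linarith : (0:ℝ) ≤ p + q)]
  -- toReal
  have htA : ((ℙ : Measure Ω) A).toReal = p := by rw [hμA, ENNReal.toReal_ofReal hp0]
  have htB : ((ℙ : Measure Ω) B).toReal = q := by rw [hμB, ENNReal.toReal_ofReal hq0]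
  have htC : ((ℙ : Measure Ω) C).toReal = 1 - (p + q) := by
    rw [hμC, ENNReal.toReal_ofReal (by linarith)]
  -- rewrite the integrand
  set ea : ℝ := Real.exp (lam * (1/K)) with headef
  set eb : ℝ := Real.exp (lam * (-(1/K))) with hebdef
  have hfun : ∀ ω, Real.exp (lam * δ ω)
      = A.indicator (fun _ => ea) ω + B.indicator (fun _ => eb) ω
        + C.indicator (fun _ => (1:ℝ)) ω := by
    intro ω
    rcases hvals ω with h | h | h
    · have hωA : ω ∈ A := h
      have hωB : ω ∉ B := fun h' => hval_ne1 (h.symm.trans (h' : δ ω = -(1/K)))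
      have hωC : ω ∉ C := fun h' => hval_ne2 (h.symm.trans (h' : δ ω = 0))
      rw [Set.indicator_of_mem hωA, Set.indicator_of_notMem hωB,
        Set.indicator_of_notMem hωC, h, ← headef]
      ring
    · have hωA : ω ∉ A := fun h' => hval_ne1 ((h' : δ ω = 1/K).symm.trans h)
      have hωB : ω ∈ B := h
      have hωC : ω ∉ C := fun h' => hval_ne3 (h.symm.trans (h' : δ ω = 0))
      rw [Set.indicator_of_notMem hωA, Set.indicator_of_mem hωB,
        Set.indicator_of_notMem hωC, h, ← hebdef]
      ring
    · have hωA : ω ∉ A := fun h' => hval_ne2 ((h' : δ ω = 1/K).symm.trans h)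
      have hωB : ω ∉ B := fun h' => hval_ne3 ((h' : δ ω = -(1/K)).symm.trans h)
      have hωC : ω ∈ C := h
      rw [Set.indicator_of_notMem hωA, Set.indicator_of_notMem hωB,
        Set.indicator_of_mem hωC, h]
      simp
  have hintA : Integrable (A.indicator (fun _ => ea)) (ℙ : Measure Ω) :=
    (integrable_const ea).indicator hA
  have hintB : Integrable (B.indicator (fun _ => eb)) (ℙ : Measure Ω) :=
    (integrable_const eb).indicator hB
  have hintC : Integrable (C.indicator (fun _ => (1:ℝ))) (ℙ : Measure Ω) :=
    (integrable_const (1:ℝ)).indicator hC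
  have hint : ∫ ω, Real.exp (lam * δ ω) ∂(ℙ : Measure Ω)
      = ea * p + eb * q + (1 - (p + q)) := by
    calc ∫ ω, Real.exp (lam * δ ω) ∂(ℙ : Measure Ω)
        = ∫ ω, (A.indicator (fun _ => ea) ω + B.indicator (fun _ => eb) ω
            + C.indicator (fun _ => (1:ℝ)) ω) ∂(ℙ : Measure Ω) := by
          exact integral_congr_ae (Filter.Eventually.of_forall hfun)
      _ = ea * p + eb * q + (1 - (p + q)) := by
          have hintAB : Integrable (fun ω => A.indicator (fun _ => ea) ω
              + B.indicator (fun _ => eb) ω) (ℙ : Measure Ω) := hintA.add hintB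
          rw [integral_add hintAB hintC, integral_add hintA hintB,
            integral_indicator_const _ hA, integral_indicator_const _ hB,
            integral_indicator_const _ hC, measureReal_def, measureReal_def, measureReal_def,
            htA, htB, htC]
          simp [smul_eq_mul]; ring
  rw [hint]
  -- pure real inequality
  have hea : ea = Real.exp x := by rw [headef, hxdef, mul_one_div]
  have heb : eb = Real.exp (-x) := by
    rw [hebdef]; congr 1; rw [hxdef]; ring
  have h1 := taylor3_aux hx0 hx1
  have h2 := taylor3_neg_aux hx0 hx1
  have hub1 : Real.exp x ≤ 1 + x + x^2/2 + (2/9) * x^3 := by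
    have := (abs_sub_le_iff.1 h1).1; linarith
  have hub2 : Real.exp (-x) ≤ 1 - x + x^2/2 + (2/9) * x^3 := by
    have := (abs_sub_le_iff.1 h2).1; linarith
  have hKεx : K * ε * x = lam * ε := by
    rw [hxdef]; field_simp
  have hexpand : 2 * z * (lam / K) ^ 2 + lam * ε + (lam / K) ^ 2 * (lam * ε)
      = 2 * z * x^2 + K * ε * x + (K * ε) * x^3 := by
    rw [← hxdef, ← hKεx]; ring
  rw [hexpand, hea, heb]
  have hexp_ge : 1 + (2 * z * x^2 + K * ε * x + (K * ε) * x^3)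
      ≤ Real.exp (2 * z * x^2 + K * ε * x + (K * ε) * x^3) := by
    have := Real.add_one_le_exp (2 * z * x^2 + K * ε * x + (K * ε) * x^3)
    linarith
  refine le_trans ?_ hexp_ge
  have hmul1 : p * Real.exp x ≤ p * (1 + x + x^2/2 + (2/9) * x^3) :=
    mul_le_mul_of_nonneg_left hub1 hp0
  have hmul2 : q * Real.exp (-x) ≤ q * (1 - x + x^2/2 + (2/9) * x^3) :=
    mul_le_mul_of_nonneg_left hub2 hq0
  have hx3x2 : x^3 ≤ x^2 := by nlinarith
  nlinarith [mul_nonneg hz0.le (sub_nonneg.2 hx3x2), mul_nonneg hKε0 (pow_nonneg hx0 3),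
    mul_nonneg hz0.le (pow_nonneg hx0 2)]
end

section
/- Under the setting of the previous statement, for all 0 ≤ λ ≤ K, E[exp(λ(δ - ε))] ≤ exp((λ^2/2)·(4z/K^2 + 2ε/K)), i.e., δ - ε is (4z/K^2 + 2ε/K, K)-sub-Gaussian. -/
open MeasureTheory ProbabilityTheory

lemma exp_quad_bound {x : ℝ} (hx : |x| ≤ 1) : |Real.exp x - (1 + x)| ≤ 3 / 4 * x ^ 2 := by
  have h := Real.exp_bound hx (n := 2) (by norm_num)
  simp only [Finset.sum_range_succ, Finset.sum_range_zero] at h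
  norm_num at h
  calc |Real.exp x - (1 + x)| ≤ |x| ^ 2 * (3 / (2 * 2)) := by
        convert h using 2 <;> norm_num
    _ = 3 / 4 * x ^ 2 := by rw [sq_abs]; ring

lemma core_ineq (K z ε lam : ℝ) (hz0 : 0 < z) (hz1 : z ≤ 1 / 4) (hK : 1 ≤ K)
    (hε0 : 0 ≤ ε) (hε1 : ε ≤ 2 * z / K) (hl0 : 0 ≤ lam) (hl1 : lam ≤ K) :
    (z + K * ε / 2) * Real.exp (lam * (1 / K - ε))
      + (z - K * ε / 2) * Real.exp (lam * (-(1 / K) - ε))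
      + (1 - 2 * z) * Real.exp (lam * (0 - ε))
      ≤ Real.exp (lam ^ 2 / 2 * (4 * z / K ^ 2 + 2 * ε / K)) := by
  have hK0 : (0:ℝ) < K := lt_of_lt_of_le one_pos hK
  set t : ℝ := lam / K with ht
  have ht0 : 0 ≤ t := div_nonneg hl0 hK0.le
  have ht1 : t ≤ 1 := (div_le_one hK0).2 hl1
  have habs : |t| ≤ 1 := by rwa [abs_of_nonneg ht0]
  have habs' : |(-t)| ≤ 1 := by rwa [abs_neg]
  have hb1 := abs_sub_le_iff.1 (exp_quad_bound habs)
  have hb2 := abs_sub_le_iff.1 (exp_quad_bound habs')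
  have he1 : Real.exp t ≤ 1 + t + 3 / 4 * t ^ 2 := by linarith [hb1.1]
  have he2 : Real.exp (-t) ≤ 1 - t + 3 / 4 * t ^ 2 := by
    have := hb2.1; rw [neg_pow] at this; nlinarith
  have he3 : 1 - t - 3 / 4 * t ^ 2 ≤ Real.exp (-t) := by
    have := hb2.2; rw [neg_pow] at this; nlinarith
  -- rewrite arguments
  have e1 : lam * (1 / K - ε) = t - lam * ε := by
    rw [ht]; field_simp
  have e2 : lam * (-(1 / K) - ε) = -t - lam * ε := by
    rw [ht]; field_simp
  have e3 : lam * (0 - ε) = -(lam * ε) := by ring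
  rw [e1, e2, e3, show t - lam * ε = t + -(lam * ε) from by ring,
    show -t - lam * ε = -t + -(lam * ε) from by ring, Real.exp_add, Real.exp_add]
  set X : ℝ := z * (Real.exp t + Real.exp (-t) - 2) + K * ε / 2 * (Real.exp t - Real.exp (-t))
    with hX
  have hfac : (z + K * ε / 2) * (Real.exp t * Real.exp (-(lam * ε)))
      + (z - K * ε / 2) * (Real.exp (-t) * Real.exp (-(lam * ε)))
      + (1 - 2 * z) * Real.exp (-(lam * ε))
      = (1 + X) * Real.exp (-(lam * ε)) := by rw [hX]; ring
  rw [hfac]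
  have hexpX : (1 + X) ≤ Real.exp X := by linarith [Real.add_one_le_exp X]
  have hεK : 0 ≤ K * ε / 2 := by positivity
  have hXle : X ≤ 2 * z * t ^ 2 + K * ε * t + K * ε * t ^ 2 := by
    have hS : Real.exp t + Real.exp (-t) - 2 ≤ 2 * t ^ 2 := by
      have := sq_nonneg t; linarith
    have hD : Real.exp t - Real.exp (-t) ≤ 2 * t + 2 * t ^ 2 := by
      have := sq_nonneg t; linarith
    have h1 : z * (Real.exp t + Real.exp (-t) - 2) ≤ z * (2 * t ^ 2) :=
      mul_le_mul_of_nonneg_left hS hz0.le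
    have h2 : K * ε / 2 * (Real.exp t - Real.exp (-t)) ≤ K * ε / 2 * (2 * t + 2 * t ^ 2) :=
      mul_le_mul_of_nonneg_left hD hεK
    rw [hX]; ring_nf at h1 h2 ⊢; linarith
  calc (1 + X) * Real.exp (-(lam * ε)) ≤ Real.exp X * Real.exp (-(lam * ε)) := by
        apply mul_le_mul_of_nonneg_right (hexpX.trans (le_refl _)) (Real.exp_pos _).le
    _ = Real.exp (X - lam * ε) := by rw [← Real.exp_add]; ring_nf
    _ ≤ Real.exp (lam ^ 2 / 2 * (4 * z / K ^ 2 + 2 * ε / K)) := by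
        apply Real.exp_le_exp.2
        have hKt : K * ε * t = lam * ε := by rw [ht]; field_simp
        have hrhs : lam ^ 2 / 2 * (4 * z / K ^ 2 + 2 * ε / K) = 2 * z * t ^ 2 + K * ε * t ^ 2 := by
          rw [ht]; field_simp; ring
        rw [hrhs]; linarith [hXle, hKt.ge]


/-- For the three-point random variable `δ` as before
(`z ∈ (0,1/4]`, `K ≥ 1`, `0 ≤ ε ≤ 2z/K`), the centered variable `δ - ε` is
`(4z/K² + 2ε/K, K)`-sub-Gaussian: for all `0 ≤ λ ≤ K`,
`E[exp(λ(δ - ε))] ≤ exp((λ²/2)·(4z/K² + 2ε/K))`. -/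
theorem subgaussian_three_point {Ω : Type*} [MeasureSpace Ω]
    [IsProbabilityMeasure (ℙ : Measure Ω)]
    (K z ε : ℝ) (hz : z ∈ Set.Ioc (0 : ℝ) (1 / 4)) (hK : 1 ≤ K)
    (hε0 : 0 ≤ ε) (hε1 : ε ≤ 2 * z / K)
    (δ : Ω → ℝ) (hmeas : Measurable δ)
    (hplus : (ℙ : Measure Ω) {ω : Ω | δ ω = 1 / K}
      = ENNReal.ofReal (z * (1 + K * ε / (2 * z))))
    (hminus : (ℙ : Measure Ω) {ω : Ω | δ ω = -(1 / K)}
      = ENNReal.ofReal (z * (1 - K * ε / (2 * z))))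
    (hvals : ∀ ω : Ω, δ ω = 1 / K ∨ δ ω = -(1 / K) ∨ δ ω = 0) :
    ∀ lam : ℝ, 0 ≤ lam → lam ≤ K →
      ∫ ω, Real.exp (lam * (δ ω - ε)) ∂(ℙ : Measure Ω)
        ≤ Real.exp (lam ^ 2 / 2 * (4 * z / K ^ 2 + 2 * ε / K)) := by
  obtain ⟨hz0, hz1⟩ := hz
  have hK0 : (0:ℝ) < K := lt_of_lt_of_le one_pos hK
  have hz0' : z ≠ 0 := ne_of_gt hz0
  intro lam hl0 hl1
  set A : Set Ω := {ω : Ω | δ ω = 1 / K} with hA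
  set B : Set Ω := {ω : Ω | δ ω = -(1 / K)} with hB
  set C : Set Ω := {ω : Ω | δ ω = 0} with hC
  have hmA : MeasurableSet A := hmeas (measurableSet_singleton (1 / K))
  have hmB : MeasurableSet B := hmeas (measurableSet_singleton (-(1 / K)))
  have hmC : MeasurableSet C := hmeas (measurableSet_singleton 0)
  have hne1 : (1 : ℝ) / K ≠ -(1 / K) := by
    intro h; have : (1:ℝ)/K > 0 := by positivity
    nlinarith
  have hne2 : (1 : ℝ) / K ≠ 0 := one_div_ne_zero hK0.ne'
  have hne3 : -((1:ℝ) / K) ≠ 0 := neg_ne_zero.2 hne2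
  set a : ℝ := Real.exp (lam * (1 / K - ε)) with ha
  set b : ℝ := Real.exp (lam * (-(1 / K) - ε)) with hb
  set c : ℝ := Real.exp (lam * (0 - ε)) with hc
  have hfun : (fun ω => Real.exp (lam * (δ ω - ε)))
      = (fun ω => A.indicator (fun _ => a) ω + B.indicator (fun _ => b) ω
          + C.indicator (fun _ => c) ω) := by
    funext ω
    rcases hvals ω with h | h | h
    · have hωA : ω ∈ A := h
      have hωB : ω ∉ B := by simp only [hB, Set.mem_setOf_eq, h]; exact hne1
      have hωC : ω ∉ C := by simp only [hC, Set.mem_setOf_eq, h]; exact hne2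
      simp [Set.indicator_of_mem hωA, Set.indicator_of_notMem hωB,
        Set.indicator_of_notMem hωC, ha, h]
    · have hωA : ω ∉ A := by simp only [hA, Set.mem_setOf_eq, h]; exact fun e => hne1 e.symm
      have hωB : ω ∈ B := h
      have hωC : ω ∉ C := by simp only [hC, Set.mem_setOf_eq, h]; exact hne3
      simp [Set.indicator_of_notMem hωA, Set.indicator_of_mem hωB,
        Set.indicator_of_notMem hωC, hb, h]
    · have hωA : ω ∉ A := by simp only [hA, Set.mem_setOf_eq, h]; exact fun e => hne2 e.symm
      have hωB : ω ∉ B := by simp only [hB, Set.mem_setOf_eq, h]; exact fun e => hne3 e.symm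
      have hωC : ω ∈ C := h
      simp [Set.indicator_of_notMem hωA, Set.indicator_of_notMem hωB,
        Set.indicator_of_mem hωC, hc, h]
  have hiA : Integrable (A.indicator (fun _ => a)) (ℙ : Measure Ω) :=
    (integrable_const a).indicator hmA
  have hiB : Integrable (B.indicator (fun _ => b)) (ℙ : Measure Ω) :=
    (integrable_const b).indicator hmB
  have hiC : Integrable (C.indicator (fun _ => c)) (ℙ : Measure Ω) :=
    (integrable_const c).indicator hmC
  have hint : ∫ ω, Real.exp (lam * (δ ω - ε)) ∂(ℙ : Measure Ω)
      = ((ℙ : Measure Ω) A).toReal * a + ((ℙ : Measure Ω) B).toReal * b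
        + ((ℙ : Measure Ω) C).toReal * c := by
    have hiAB : Integrable (fun ω => A.indicator (fun _ => a) ω
        + B.indicator (fun _ => b) ω) (ℙ : Measure Ω) := hiA.add hiB
    rw [hfun, integral_add hiAB hiC, integral_add hiA hiB,
      integral_indicator_const a hmA, integral_indicator_const b hmB,
      integral_indicator_const c hmC]
    simp [smul_eq_mul]
    rfl
  -- values of probabilities
  have hKε : K * ε ≤ 2 * z := by
    have h := (le_div_iff₀ hK0).1 hε1
    linarith
  have hpA : ((ℙ : Measure Ω) A).toReal = z + K * ε / 2 := by
    rw [hA, hplus, ENNReal.toReal_ofReal (by positivity)]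
    field_simp
  have hpB : ((ℙ : Measure Ω) B).toReal = z - K * ε / 2 := by
    have hnn : 0 ≤ z * (1 - K * ε / (2 * z)) := by
      apply mul_nonneg hz0.le
      rw [sub_nonneg, div_le_one (by positivity)]
      linarith
    rw [hB, hminus, ENNReal.toReal_ofReal hnn]
    field_simp
  have hdisjAB : Disjoint A B := by
    rw [Set.disjoint_left]; intro ω h1 h2
    have h1' : δ ω = 1 / K := h1
    have h2' : δ ω = -(1 / K) := h2
    exact hne1 (h1'.symm.trans h2')
  have hdisjABC : Disjoint (A ∪ B) C := by
    rw [Set.disjoint_left]; intro ω h1 h2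
    have h2' : δ ω = 0 := h2
    rcases h1 with h | h
    · exact hne2 ((show δ ω = 1 / K from h).symm.trans h2')
    · exact hne3 ((show δ ω = -(1 / K) from h).symm.trans h2')
  have hcover : A ∪ B ∪ C = Set.univ := by
    ext ω; simp only [Set.mem_union, Set.mem_univ, iff_true, hA, hB, hC, Set.mem_setOf_eq]
    rcases hvals ω with h | h | h
    · exact Or.inl (Or.inl h)
    · exact Or.inl (Or.inr h)
    · exact Or.inr h
  have hsum : (ℙ : Measure Ω) A + (ℙ : Measure Ω) B + (ℙ : Measure Ω) C = 1 := by
    rw [← measure_union hdisjAB hmB, ← measure_union hdisjABC hmC, hcover, measure_univ]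
  have hpC : ((ℙ : Measure Ω) C).toReal = 1 - 2 * z := by
    have h1 : ((ℙ : Measure Ω) A).toReal + ((ℙ : Measure Ω) B).toReal
        + ((ℙ : Measure Ω) C).toReal = 1 := by
      rw [← ENNReal.toReal_add (measure_ne_top _ _) (measure_ne_top _ _),
        ← ENNReal.toReal_add (by exact ENNReal.add_ne_top.2 ⟨measure_ne_top _ _, measure_ne_top _ _⟩) (measure_ne_top _ _), hsum, ENNReal.toReal_one]
    rw [hpA, hpB] at h1; linarith
  rw [hint, hpA, hpB, hpC, ha, hb, hc]
  exact core_ineq K z ε lam hz0 hz1 hK hε0 hε1 hl0 hl1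
end
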